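/- Let v > 0 and let f : ℝ → ℝ be three times differentiable on [0, v] with f‴(w) ≥ 0 for all w ∈ [0, v], f′(0) = 0, f′(v) = 0, and f(v) = 0. Then f(w) ≥ 0 for all w ∈ [0, v]. -/

import Mathlib

/-- If `f` is three times differentiable on `[0, v]` with `f‴ ≥ 0` there,
`f′(0) = f′(v) = 0` and `f(v) = 0`, then `f ≥ 0` on `[0, v]`. -/
theorem nonneg_of_third_deriv_nonneg (v : ℝ) (hv : 0 < v)
    (f f' f'' f''' : ℝ → ℝ)
    (hd1 : ∀ w ∈ Set.Icc (0:ℝ) v, HasDerivWithinAt f (f' w) (Set.Icc 0 v) w)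
    (hd2 : ∀ w ∈ Set.Icc (0:ℝ) v, HasDerivWithinAt f' (f'' w) (Set.Icc 0 v) w)
    (hd3 : ∀ w ∈ Set.Icc (0:ℝ) v, HasDerivWithinAt f'' (f''' w) (Set.Icc 0 v) w)
    (h3 : ∀ w ∈ Set.Icc (0:ℝ) v, 0 ≤ f''' w)
    (h10 : f' 0 = 0) (h1v : f' v = 0) (hfv : f v = 0) :
    ∀ w ∈ Set.Icc (0:ℝ) v, 0 ≤ f w := by
  have hIoo : Set.Ioo (0:ℝ) v ⊆ Set.Icc 0 v := Set.Ioo_subset_Icc_self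
  have hint : interior (Set.Icc (0:ℝ) v) = Set.Ioo 0 v := interior_Icc
  have hcont' : ContinuousOn f' (Set.Icc 0 v) :=
    fun x hx => (hd2 x hx).continuousWithinAt
  -- f' is convex on [0, v]
  have hconv : ConvexOn ℝ (Set.Icc (0:ℝ) v) f' := by
    apply convexOn_of_hasDerivWithinAt2_nonneg (convex_Icc 0 v) hcont'
    · intro x hx
      rw [hint] at hx ⊢
      exact ((hd2 x (hIoo hx)).mono hIoo)
    · intro x hx
      rw [hint] at hx ⊢
      exact ((hd3 x (hIoo hx)).mono hIoo)
    · intro x hx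
      rw [hint] at hx
      exact h3 x (hIoo hx)
  -- f' ≤ 0 on [0, v]
  have hnp : ∀ w ∈ Set.Icc (0:ℝ) v, f' w ≤ 0 := by
    intro w hw
    obtain ⟨hw0, hwv⟩ := hw
    have ha : (0:ℝ) ≤ (v - w) / v := div_nonneg (by linarith) hv.le
    have hb : (0:ℝ) ≤ w / v := div_nonneg hw0 hv.le
    have hab : (v - w) / v + w / v = 1 := by field_simp; ring
    have := hconv.2 (Set.left_mem_Icc.2 hv.le) (Set.right_mem_Icc.2 hv.le) ha hb hab
    simp only [smul_eq_mul, mul_zero, zero_add, h10, h1v, mul_zero, add_zero] at this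
    have hval : w / v * v = w := by field_simp
    rw [hval] at this
    exact this
  -- f is antitone on [0, v]
  have hanti : AntitoneOn f (Set.Icc (0:ℝ) v) := by
    apply antitoneOn_of_hasDerivWithinAt_nonpos (convex_Icc 0 v)
      (fun x hx => (hd1 x hx).continuousWithinAt)
    · intro x hx
      rw [hint] at hx ⊢
      exact ((hd1 x (hIoo hx)).mono hIoo)
    · intro x hx
      rw [hint] at hx
      exact hnp x (hIoo hx)
  intro w hw
  have := hanti hw (Set.right_mem_Icc.2 hv.le) hw.2
  rw [hfv] at this
  exact this
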